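/- Fix real κ > 0 and integers N ≥ 1 and M ≥ 1; set K = 2N+M. Let α_1,…,α_K be real numbers with α_j = 1/√κ for 1 ≤ j ≤ 2N and α_k ∈ {√κ/2, −2/√κ} for 2N+1 ≤ k ≤ K. On the chamber {x ∈ ℝ^K : x_1 < x_2 < ⋯ < x_K} define Φ(x) = ∏_{1≤j<k≤K} (x_k−x_j)^{2α_jα_k}. Then for every j ∈ {1,…,2N}: (κ/4)∂_j²Φ(x) + Σ_{k=1, k≠j}^{2N} [∂_kΦ(x)/(x_k−x_j) − ((6−κ)/(2κ))·Φ(x)/(x_k−x_j)²] = Σ_{k=2N+1}^{K} ∂_k( −Φ(x)/(x_k−x_j) ), as an identity of smooth functions on the chamber. -/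

import Mathlib

open Filter Set Finset

noncomputable section

/-- The chamber {x ∈ ℝ^K : x₁ < x₂ < ⋯ < x_K}. -/
def chamber (n : ℕ) : Set (Fin n → ℝ) := {x | ∀ i j : Fin n, i < j → x i < x j}

/-- The partial derivative ∂ⱼ. -/
def pd {n : ℕ} (j : Fin n) (F : (Fin n → ℝ) → ℝ) (x : Fin n → ℝ) : ℝ :=
  fderiv ℝ F x (Pi.single j 1)

/-- The second partial derivative ∂ⱼ². -/
def pd2 {n : ℕ} (j : Fin n) (F : (Fin n → ℝ) → ℝ) (x : Fin n → ℝ) : ℝ :=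
  pd j (fun y => pd j F y) x

namespace NSaux

variable {n : ℕ}

lemma isOpen_chamber : IsOpen (chamber n) := by
  have : chamber n = ⋂ (i : Fin n) (j : Fin n) (_ : i < j), {x : Fin n → ℝ | x i < x j} := by
    ext x; simp [chamber]
  rw [this]
  exact isOpen_iInter_of_finite fun i => isOpen_iInter_of_finite fun j =>
    isOpen_iInter_of_finite fun _ => isOpen_lt (continuous_apply i) (continuous_apply j)

lemma sub_pos_of_chamber {x : Fin n → ℝ} (hx : x ∈ chamber n) {i k : Fin n} (h : i < k) :
    0 < x k - x i := sub_pos.2 (hx i k h)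

lemma sub_ne_of_chamber {x : Fin n → ℝ} (hx : x ∈ chamber n) {i k : Fin n} (h : i ≠ k) :
    x k - x i ≠ 0 := by
  rcases lt_or_gt_of_ne h with h' | h'
  · exact ne_of_gt (sub_pos_of_chamber hx h')
  · exact ne_of_lt (sub_neg.2 (hx k i h'))

/-- log-potential -/
def E (α : Fin n → ℝ) (x : Fin n → ℝ) : ℝ :=
  ∑ k, ∑ j, if j < k then 2 * α j * α k * Real.log (x k - x j) else 0

lemma phi_eq_exp (α : Fin n → ℝ) {x : Fin n → ℝ} (hx : x ∈ chamber n) :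
    (∏ k : Fin n, ∏ j : Fin n, if j < k then (x k - x j) ^ (2 * α j * α k) else 1)
      = Real.exp (E α x) := by
  rw [E, Real.exp_sum]
  refine Finset.prod_congr rfl fun k _ => ?_
  rw [Real.exp_sum]
  refine Finset.prod_congr rfl fun j _ => ?_
  by_cases h : j < k
  · simp only [if_pos h]
    rw [Real.rpow_def_of_pos (sub_pos_of_chamber hx h), mul_comm]
  · simp [if_neg h]

/-- derivative CLM of E at x -/
def D (α : Fin n → ℝ) (x : Fin n → ℝ) : (Fin n → ℝ) →L[ℝ] ℝ :=
  ∑ k, ∑ j, if j < k then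
    (2 * α j * α k) • ((x k - x j)⁻¹ •
      (ContinuousLinearMap.proj (R := ℝ) (φ := fun _ : Fin n => ℝ) k
        - ContinuousLinearMap.proj j)) else 0

lemma hasFDerivAt_E (α : Fin n → ℝ) {x : Fin n → ℝ} (hx : x ∈ chamber n) :
    HasFDerivAt (E α) (D α x) x := by
  apply HasFDerivAt.fun_sum
  intro k _
  apply HasFDerivAt.fun_sum
  intro j _
  by_cases h : j < k
  · simp only [if_pos h]
    have hsub : HasFDerivAt (fun y : Fin n → ℝ => y k - y j)
        (ContinuousLinearMap.proj (R := ℝ) (φ := fun _ : Fin n => ℝ) k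
          - ContinuousLinearMap.proj j) x :=
      ((ContinuousLinearMap.proj (R := ℝ) (φ := fun _ : Fin n => ℝ) k).hasFDerivAt.sub
        (ContinuousLinearMap.proj (R := ℝ) (φ := fun _ : Fin n => ℝ) j).hasFDerivAt)
    exact (hsub.log (sub_ne_of_chamber hx (ne_of_lt h))).const_mul _
  · simp only [if_neg h]
    exact hasFDerivAt_const 0 x

/-- logarithmic gradient -/
def G (α : Fin n → ℝ) (i : Fin n) (x : Fin n → ℝ) : ℝ :=
  ∑ l ∈ univ.erase i, 2 * α i * α l * (x i - x l)⁻¹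

lemma D_apply_single (α : Fin n → ℝ) (x : Fin n → ℝ) (i : Fin n) :
    (D α x) (Pi.single i 1) = G α i x := by
  have hterm : ∀ k j1 : Fin n,
      ((if j1 < k then (2 * α j1 * α k) • ((x k - x j1)⁻¹ •
        (ContinuousLinearMap.proj (R := ℝ) (φ := fun _ : Fin n => ℝ) k
          - ContinuousLinearMap.proj j1)) else 0) : (Fin n → ℝ) →L[ℝ] ℝ) (Pi.single i 1)
      = (if j1 < k then 2 * α j1 * α k * (x k - x j1)⁻¹ else 0)
          * ((if k = i then (1:ℝ) else 0) - (if j1 = i then (1:ℝ) else 0)) := by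
    intro k j1
    by_cases h : j1 < k
    · simp [if_pos h, Pi.single_apply, mul_assoc]
    · simp [if_neg h]
  rw [D]
  simp only [ContinuousLinearMap.sum_apply]
  simp only [hterm]
  set c : Fin n → Fin n → ℝ :=
    fun j k => if j < k then 2 * α j * α k * (x k - x j)⁻¹ else 0 with hcdef
  have h1 : ∀ k j1 : Fin n, c j1 k * ((if k = i then (1:ℝ) else 0) - (if j1 = i then (1:ℝ) else 0))
      = (if k = i then c j1 k else 0) - (if j1 = i then c j1 k else 0) := by
    intro k j1; by_cases h : k = i <;> by_cases h' : j1 = i <;> simp [h, h']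
  simp only [show ∀ k j1 : Fin n, (if j1 < k then 2 * α j1 * α k * (x k - x j1)⁻¹ else 0) = c j1 k from
    fun _ _ => rfl, h1, Finset.sum_sub_distrib]
  rw [Finset.sum_comm (f := fun k j1 => if j1 = i then c j1 k else 0)]
  have h2 : ∀ k : Fin n, (∑ j1 : Fin n, if k = i then c j1 k else 0)
      = if k = i then ∑ j1 : Fin n, c j1 k else 0 := by
    intro k; split_ifs <;> simp
  have h3 : ∀ j1 : Fin n, (∑ k : Fin n, if j1 = i then c j1 k else 0)
      = if j1 = i then ∑ k : Fin n, c j1 k else 0 := by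
    intro j1; split_ifs <;> simp
  simp only [h2, h3, Finset.sum_ite_eq', Finset.mem_univ, if_pos, if_true]
  have herase : G α i x
      = ∑ l : Fin n, if l = i then 0 else 2 * α i * α l * (x i - x l)⁻¹ := by
    rw [G, Finset.sum_ite, Finset.sum_const_zero, zero_add, ← Finset.filter_ne' univ i]
  rw [herase, ← Finset.sum_sub_distrib]
  refine Finset.sum_congr rfl fun l _ => ?_
  rcases lt_trichotomy l i with h | h | h
  · rw [if_neg (ne_of_lt h)]
    simp only [hcdef]
    rw [if_pos h, if_neg (not_lt_of_gt h)]
    ring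
  · simp [h, hcdef]
  · rw [if_neg (ne_of_gt h)]
    simp only [hcdef]
    rw [if_neg (not_lt_of_gt h), if_pos h]
    have : (x i - x l)⁻¹ = -(x l - x i)⁻¹ := by rw [← inv_neg, neg_sub]
    rw [this]; ring

section Phi
variable (α : Fin n → ℝ) (Φ : (Fin n → ℝ) → ℝ)
  (hΦ : ∀ x, Φ x = ∏ k : Fin n, ∏ j : Fin n,
      if j < k then (x k - x j) ^ (2 * α j * α k) else 1)

include hΦ

lemma phi_eventually {x : Fin n → ℝ} (hx : x ∈ chamber n) :
    Φ =ᶠ[nhds x] fun y => Real.exp (E α y) :=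
  Filter.eventuallyEq_of_mem (isOpen_chamber.mem_nhds hx)
    (fun y hy => (hΦ y).trans (phi_eq_exp α hy))

lemma phi_val {x : Fin n → ℝ} (hx : x ∈ chamber n) : Φ x = Real.exp (E α x) :=
  (hΦ x).trans (phi_eq_exp α hx)

lemma phi_pos {x : Fin n → ℝ} (hx : x ∈ chamber n) : 0 < Φ x := by
  rw [phi_val α Φ hΦ hx]; exact Real.exp_pos _

lemma hasFDerivAt_Phi {x : Fin n → ℝ} (hx : x ∈ chamber n) :
    HasFDerivAt Φ (Φ x • D α x) x := by
  have h := (hasFDerivAt_E α hx).exp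
  rw [← phi_val α Φ hΦ hx] at h
  exact h.congr_of_eventuallyEq (phi_eventually α Φ hΦ hx)

lemma pd_Phi {x : Fin n → ℝ} (hx : x ∈ chamber n) (i : Fin n) :
    pd i Φ x = Φ x * G α i x := by
  rw [pd, (hasFDerivAt_Phi α Φ hΦ hx).fderiv, ContinuousLinearMap.smul_apply,
    D_apply_single, smul_eq_mul]

end Phi

/-- second-derivative correction term -/
def Hf (α : Fin n → ℝ) (j : Fin n) (x : Fin n → ℝ) : ℝ :=
  ∑ l ∈ univ.erase j, 2 * α j * α l * (-((x j - x l) ^ 2)⁻¹)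

def DG (α : Fin n → ℝ) (j : Fin n) (x : Fin n → ℝ) : (Fin n → ℝ) →L[ℝ] ℝ :=
  ∑ l ∈ univ.erase j, (2 * α j * α l) • ((-((x j - x l) ^ 2)⁻¹) •
    (ContinuousLinearMap.proj (R := ℝ) (φ := fun _ : Fin n => ℝ) j
      - ContinuousLinearMap.proj l))

lemma hasFDerivAt_G (α : Fin n → ℝ) (j : Fin n) {x : Fin n → ℝ} (hx : x ∈ chamber n) :
    HasFDerivAt (G α j) (DG α j x) x := by
  apply HasFDerivAt.fun_sum
  intro l hl
  have hl' : l ≠ j := (Finset.mem_erase.1 hl).1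
  have hsub : HasFDerivAt (fun y : Fin n → ℝ => y j - y l)
      (ContinuousLinearMap.proj (R := ℝ) (φ := fun _ : Fin n => ℝ) j
        - ContinuousLinearMap.proj l) x :=
    ((ContinuousLinearMap.proj (R := ℝ) (φ := fun _ : Fin n => ℝ) j).hasFDerivAt.sub
      (ContinuousLinearMap.proj (R := ℝ) (φ := fun _ : Fin n => ℝ) l).hasFDerivAt)
  have hne : x j - x l ≠ 0 := sub_ne_of_chamber hx hl'
  have hinv := (hasDerivAt_inv hne).comp_hasFDerivAt x hsub
  simp only [Function.comp_def] at hinv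
  exact hinv.const_mul _

lemma DG_apply_single (α : Fin n → ℝ) (j : Fin n) (x : Fin n → ℝ) :
    (DG α j x) (Pi.single j 1) = Hf α j x := by
  rw [DG, Hf]
  simp only [ContinuousLinearMap.sum_apply]
  refine Finset.sum_congr rfl fun l hl => ?_
  have hl' : l ≠ j := (Finset.mem_erase.1 hl).1
  simp [Pi.single_apply, hl']

lemma pd2_Phi (α : Fin n → ℝ) (Φ : (Fin n → ℝ) → ℝ)
    (hΦ : ∀ x, Φ x = ∏ k : Fin n, ∏ j : Fin n,
      if j < k then (x k - x j) ^ (2 * α j * α k) else 1)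
    {x : Fin n → ℝ} (hx : x ∈ chamber n) (j : Fin n) :
    pd2 j Φ x = Φ x * ((G α j x) ^ 2 + Hf α j x) := by
  have hev : (fun y => pd j Φ y) =ᶠ[nhds x] fun y => Φ y * G α j y :=
    Filter.eventuallyEq_of_mem (isOpen_chamber.mem_nhds hx)
      (fun y hy => pd_Phi α Φ hΦ hy j)
  have hmul : HasFDerivAt (fun y => Φ y * G α j y)
      (Φ x • DG α j x + G α j x • (Φ x • D α x)) x :=
    (hasFDerivAt_Phi α Φ hΦ hx).mul (hasFDerivAt_G α j hx)
  have hd : HasFDerivAt (fun y => pd j Φ y)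
      (Φ x • DG α j x + G α j x • (Φ x • D α x)) x :=
    hmul.congr_of_eventuallyEq hev
  rw [pd2, pd, hd.fderiv]
  simp only [ContinuousLinearMap.add_apply, ContinuousLinearMap.smul_apply,
    DG_apply_single, D_apply_single, smul_eq_mul]
  ring

lemma pd_rhs (α : Fin n → ℝ) (Φ : (Fin n → ℝ) → ℝ)
    (hΦ : ∀ x, Φ x = ∏ k : Fin n, ∏ j : Fin n,
      if j < k then (x k - x j) ^ (2 * α j * α k) else 1)
    {x : Fin n → ℝ} (hx : x ∈ chamber n) {j k : Fin n} (hjk : j ≠ k) :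
    pd k (fun y => -Φ y / (y k - y j)) x
      = Φ x * ((x k - x j) ^ 2)⁻¹ - Φ x * G α k x * (x k - x j)⁻¹ := by
  have hfun : (fun y : Fin n → ℝ => -Φ y / (y k - y j))
      = fun y => (-Φ y) * (y k - y j)⁻¹ := by
    funext y; rw [div_eq_mul_inv]
  have hsub : HasFDerivAt (fun y : Fin n → ℝ => y k - y j)
      (ContinuousLinearMap.proj (R := ℝ) (φ := fun _ : Fin n => ℝ) k
        - ContinuousLinearMap.proj j) x :=
    ((ContinuousLinearMap.proj (R := ℝ) (φ := fun _ : Fin n => ℝ) k).hasFDerivAt.sub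
      (ContinuousLinearMap.proj (R := ℝ) (φ := fun _ : Fin n => ℝ) j).hasFDerivAt)
  have hne : x k - x j ≠ 0 := sub_ne_of_chamber hx hjk
  have hinv := (hasDerivAt_inv hne).comp_hasFDerivAt x hsub
  simp only [Function.comp_def] at hinv
  have hmul : HasFDerivAt (fun y => -Φ y * (y k - y j)⁻¹) _ x :=
    ((hasFDerivAt_Phi α Φ hΦ hx).neg).mul hinv
  rw [pd, hfun, hmul.fderiv]
  simp only [ContinuousLinearMap.add_apply, ContinuousLinearMap.smul_apply,
    ContinuousLinearMap.neg_apply, ContinuousLinearMap.sub_apply,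
    ContinuousLinearMap.proj_apply, Pi.single_apply, smul_eq_mul, Pi.neg_apply]
  rw [D_apply_single]
  have hkj : ¬ (j = k) := hjk
  simp only [if_pos rfl, hkj, if_false, if_neg hkj, if_true]
  ring

lemma sum_erase_antisymm {ι : Type*} [DecidableEq ι] (s : Finset ι) (f : ι → ι → ℝ)
    (h : ∀ k ∈ s, ∀ l ∈ s, k ≠ l → f k l + f l k = 0) :
    ∑ k ∈ s, ∑ l ∈ s.erase k, f k l = 0 := by
  have key : ∀ g : ι → ι → ℝ, ∑ k ∈ s, ∑ l ∈ s.erase k, g k l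
      = ∑ k ∈ s, ∑ l ∈ s, if l = k then 0 else g k l := by
    intro g
    refine Finset.sum_congr rfl fun k _ => ?_
    rw [Finset.sum_ite, Finset.sum_const_zero, zero_add, ← Finset.filter_ne' s k]
  have hswap : ∑ k ∈ s, ∑ l ∈ s.erase k, f k l = ∑ k ∈ s, ∑ l ∈ s.erase k, f l k := by
    rw [key f, key (fun k l => f l k)]
    rw [Finset.sum_comm]
    refine Finset.sum_congr rfl fun a _ => Finset.sum_congr rfl fun b _ => ?_
    exact if_congr eq_comm rfl rfl
  have hzero : ∑ k ∈ s, ∑ l ∈ s.erase k, (f k l + f l k) = 0 := by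
    refine Finset.sum_eq_zero fun k hk => Finset.sum_eq_zero fun l hl => ?_
    exact h k hk l (Finset.mem_of_mem_erase hl) (fun e => (Finset.mem_erase.1 hl).1 e.symm)
  simp only [Finset.sum_add_distrib] at hzero
  rw [← hswap] at hzero
  linarith

lemma core (κ : ℝ) (hκ : 0 < κ) (α : Fin n → ℝ) (j : Fin n)
    (haj : α j = 1 / Real.sqrt κ) (w : Fin n → ℝ)
    (hw : ∀ k, k ≠ j → 2 * α j * α k + (α k) ^ 2 = κ/2 * (α j * α k) + w k)
    {x : Fin n → ℝ} (hx : x ∈ chamber n) :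
    κ/4 * ((G α j x) ^ 2 + Hf α j x)
      + ∑ k ∈ univ.erase j, (G α k x * (x k - x j)⁻¹ - w k * ((x k - x j) ^ 2)⁻¹) = 0 := by
  set s := Real.sqrt κ with hsdef
  have hs : s ^ 2 = κ := Real.sq_sqrt hκ.le
  have hs0 : s ≠ 0 := Real.sqrt_ne_zero'.2 hκ
  set e : Finset (Fin n) := univ.erase j with hedef
  have hGk : ∀ k ∈ e, G α k x
      = (∑ l ∈ e.erase k, 2 * α k * α l * (x k - x l)⁻¹)
        + 2 * α k * α j * (x k - x j)⁻¹ := by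
    intro k hk
    have hkj : k ≠ j := (Finset.mem_erase.1 hk).1
    have hjmem : j ∈ univ.erase k := Finset.mem_erase.2 ⟨hkj.symm, Finset.mem_univ j⟩
    rw [G, ← Finset.sum_erase_add _ _ hjmem, Finset.erase_right_comm]
  have hsq : (G α j x) ^ 2 = ∑ k ∈ e, ((2 * α j * α k * (x j - x k)⁻¹) ^ 2
      + ∑ l ∈ e.erase k, (2 * α j * α k * (x j - x k)⁻¹) * (2 * α j * α l * (x j - x l)⁻¹)) := by
    rw [G, sq, Finset.sum_mul_sum]
    refine Finset.sum_congr rfl fun k hk => ?_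
    rw [← Finset.sum_erase_add _ _ hk, add_comm, sq]
  set f : Fin n → Fin n → ℝ := fun k l =>
    κ/4 * ((2 * α j * α k * (x j - x k)⁻¹) * (2 * α j * α l * (x j - x l)⁻¹))
      + 2 * α k * α l * (x k - x l)⁻¹ * (x k - x j)⁻¹ with hfdef
  have key : ∀ k ∈ e,
      κ/4 * (((2 * α j * α k * (x j - x k)⁻¹) ^ 2
          + ∑ l ∈ e.erase k, (2 * α j * α k * (x j - x k)⁻¹) * (2 * α j * α l * (x j - x l)⁻¹))
        + 2 * α j * α k * (-((x j - x k) ^ 2)⁻¹))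
        + (G α k x * (x k - x j)⁻¹ - w k * ((x k - x j) ^ 2)⁻¹)
      = ∑ l ∈ e.erase k, f k l := by
    intro k hk
    have hkj : k ≠ j := (Finset.mem_erase.1 hk).1
    rw [hGk k hk, add_mul, Finset.sum_mul, mul_add, mul_add, Finset.mul_sum]
    have hP : κ/4 * (2 * α j * α k * (x j - x k)⁻¹) ^ 2
        + κ/4 * (2 * α j * α k * (-((x j - x k) ^ 2)⁻¹))
        + (2 * α k * α j * (x k - x j)⁻¹ * (x k - x j)⁻¹ - w k * ((x k - x j) ^ 2)⁻¹) = 0 := by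
      have hwk := hw k hkj
      have hne : x k - x j ≠ 0 := sub_ne_of_chamber hx (Ne.symm hkj)
      have hne' : x j - x k ≠ 0 := sub_ne_of_chamber hx hkj
      have hwval : w k = 2 * α j * α k + (α k) ^ 2 - κ/2 * (α j * α k) := by linarith
      rw [hwval, haj, ← hs]
      field_simp
      ring
    simp only [hfdef]
    rw [Finset.sum_add_distrib]
    linarith [hP]
  calc κ/4 * ((G α j x) ^ 2 + Hf α j x)
      + ∑ k ∈ e, (G α k x * (x k - x j)⁻¹ - w k * ((x k - x j) ^ 2)⁻¹)
      = ∑ k ∈ e, (κ/4 * (((2 * α j * α k * (x j - x k)⁻¹) ^ 2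
          + ∑ l ∈ e.erase k, (2 * α j * α k * (x j - x k)⁻¹) * (2 * α j * α l * (x j - x l)⁻¹))
        + 2 * α j * α k * (-((x j - x k) ^ 2)⁻¹))
        + (G α k x * (x k - x j)⁻¹ - w k * ((x k - x j) ^ 2)⁻¹)) := by
        rw [hsq, Hf, mul_add, Finset.mul_sum, Finset.mul_sum, ← Finset.sum_add_distrib,
          ← Finset.sum_add_distrib]
        refine Finset.sum_congr rfl fun k hk => ?_
        ring
    _ = ∑ k ∈ e, ∑ l ∈ e.erase k, f k l := Finset.sum_congr rfl key
    _ = 0 := by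
        apply sum_erase_antisymm
        intro k hk l hl hkl
        have hkj : k ≠ j := (Finset.mem_erase.1 hk).1
        have hlj : l ≠ j := (Finset.mem_erase.1 hl).1
        have h1 : x k - x j ≠ 0 := sub_ne_of_chamber hx (Ne.symm hkj)
        have h2 : x l - x j ≠ 0 := sub_ne_of_chamber hx (Ne.symm hlj)
        have h3 : x k - x l ≠ 0 := sub_ne_of_chamber hx (Ne.symm hkl)
        have h4 : x j - x k ≠ 0 := sub_ne_of_chamber hx hkj
        have h5 : x j - x l ≠ 0 := sub_ne_of_chamber hx hlj
        have h6 : x l - x k ≠ 0 := sub_ne_of_chamber hx hkl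
        rw [hfdef]
        simp only
        rw [haj, ← hs]
        field_simp
        ring

end NSaux

open NSaux

theorem null_state_total_derivative
    (κ : ℝ) (hκ : 0 < κ) (N M : ℕ) (hN : 1 ≤ N) (hM : 1 ≤ M)
    (α : Fin (2*N+M) → ℝ)
    (hα1 : ∀ j : Fin (2*N+M), (j:ℕ) < 2*N → α j = 1/Real.sqrt κ)
    (hα2 : ∀ k : Fin (2*N+M), 2*N ≤ (k:ℕ) →
        α k = Real.sqrt κ / 2 ∨ α k = -2/Real.sqrt κ)
    (Φ : (Fin (2*N+M) → ℝ) → ℝ)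
    (hΦ : ∀ x, Φ x = ∏ k : Fin (2*N+M), ∏ j : Fin (2*N+M),
        if j < k then (x k - x j) ^ (2 * α j * α k) else 1)
    (j : Fin (2*N+M)) (hj : (j:ℕ) < 2*N) :
    ∀ x ∈ chamber (2*N+M),
      κ/4 * pd2 j Φ x
        + ∑ k ∈ Finset.univ.filter (fun k : Fin (2*N+M) => (k:ℕ) < 2*N ∧ k ≠ j),
            (pd k Φ x / (x k - x j) - (6-κ)/(2*κ) * Φ x / (x k - x j)^2)
      = ∑ k ∈ Finset.univ.filter (fun k : Fin (2*N+M) => 2*N ≤ (k:ℕ)),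
          pd k (fun y => -Φ y / (y k - y j)) x := by
  intro x hx
  have hs : (Real.sqrt κ) ^ 2 = κ := Real.sq_sqrt hκ.le
  have hs0 : Real.sqrt κ ≠ 0 := Real.sqrt_ne_zero'.2 hκ
  set w : Fin (2*N+M) → ℝ := fun k => if (k:ℕ) < 2*N then (6-κ)/(2*κ) else 1 with hwdef
  have hw : ∀ k, k ≠ j → 2 * α j * α k + (α k) ^ 2 = κ/2 * (α j * α k) + w k := by
    intro k hkj
    by_cases hk : (k:ℕ) < 2*N
    · simp only [hwdef, if_pos hk]
      rw [hα1 k hk, hα1 j hj, ← hs]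
      rw [Real.sqrt_sq (Real.sqrt_nonneg _)]
      field_simp
      ring
    · simp only [hwdef, if_neg hk]
      rcases hα2 k (le_of_not_gt hk) with h | h
      · rw [h, hα1 j hj, ← hs]
        rw [Real.sqrt_sq (Real.sqrt_nonneg _)]
        field_simp
        ring
      · rw [h, hα1 j hj, ← hs]
        rw [Real.sqrt_sq (Real.sqrt_nonneg _)]
        field_simp
        ring
  have hcore := core κ hκ α j (hα1 j hj) w hw hx
  -- split the erase-sum in hcore according to the predicate `(k:ℕ) < 2*N`
  set e : Finset (Fin (2*N+M)) := univ.erase j with hedef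
  set F : Fin (2*N+M) → ℝ :=
    fun k => G α k x * (x k - x j)⁻¹ - w k * ((x k - x j) ^ 2)⁻¹ with hFdef
  have hsplit : ∑ k ∈ e, F k
      = ∑ k ∈ univ.filter (fun k : Fin (2*N+M) => (k:ℕ) < 2*N ∧ k ≠ j), F k
        + ∑ k ∈ univ.filter (fun k : Fin (2*N+M) => 2*N ≤ (k:ℕ)), F k := by
    rw [← Finset.sum_filter_add_sum_filter_not e (fun k => (k:ℕ) < 2*N) F]
    congr 1
    · congr 1
      ext k
      simp only [hedef, Finset.mem_filter, Finset.mem_erase, Finset.mem_univ, true_and,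
        and_true]
      tauto
    · congr 1
      ext k
      simp only [hedef, Finset.mem_filter, Finset.mem_erase, Finset.mem_univ, true_and,
        and_true, not_lt]
      constructor
      · rintro ⟨_, h⟩; exact h
      · intro h
        refine ⟨?_, h⟩
        intro hkj
        rw [hkj] at h
        omega
  rw [hsplit] at hcore
  -- rewrite both sides of the goal in terms of Φ x * (…)
  have h1 : ∑ k ∈ univ.filter (fun k : Fin (2*N+M) => (k:ℕ) < 2*N ∧ k ≠ j),
      (pd k Φ x / (x k - x j) - (6-κ)/(2*κ) * Φ x / (x k - x j)^2)
      = Φ x * ∑ k ∈ univ.filter (fun k : Fin (2*N+M) => (k:ℕ) < 2*N ∧ k ≠ j), F k := by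
    rw [Finset.mul_sum]
    refine Finset.sum_congr rfl fun k hk => ?_
    obtain ⟨hklt, hkj⟩ := (Finset.mem_filter.1 hk).2
    rw [pd_Phi α Φ hΦ hx k]
    simp only [hFdef, hwdef, if_pos hklt]
    rw [div_eq_mul_inv, div_eq_mul_inv]
    ring
  have h2 : ∑ k ∈ univ.filter (fun k : Fin (2*N+M) => 2*N ≤ (k:ℕ)),
      pd k (fun y => -Φ y / (y k - y j)) x
      = - (Φ x * ∑ k ∈ univ.filter (fun k : Fin (2*N+M) => 2*N ≤ (k:ℕ)), F k) := by
    rw [Finset.mul_sum, ← Finset.sum_neg_distrib]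
    refine Finset.sum_congr rfl fun k hk => ?_
    have hkge : 2*N ≤ (k:ℕ) := (Finset.mem_filter.1 hk).2
    have hjk : j ≠ k := by
      intro h
      rw [h] at hj
      omega
    rw [pd_rhs α Φ hΦ hx hjk]
    simp only [hFdef, hwdef, if_neg (not_lt.2 hkge)]
    ring
  rw [pd2_Phi α Φ hΦ hx j, h1, h2]
  linear_combination (Φ x) * hcore
end
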